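/- For X* ~ Sk(λ₁, λ₂) with mean μ = λ₁ - λ₂ and variance σ² = λ₁ + λ₂, the second-order partial moment satisfies E[(X*)² · 1_{X* ≥ 1}] = (σ² + μ²) · P(X* ≥ 1) + λ₂ μ · P(X* = 1) + λ₁ (1 + μ) · P(X* = 0). -/

import Mathlib

open Real Filter

/-- PMF of the Poisson distribution with mean `l`. -/
noncomputable def poissonPMF (l : ℝ) (n : ℕ) : ℝ :=
  Real.exp (-l) * l ^ n / n.factorial

/-- PMF of the Skellam distribution `Sk(l1, l2)`, i.e. the distribution of the
difference `X₁ - X₂` of independent Poisson variables with means `l1`, `l2`,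
obtained by the convolution formula. -/
noncomputable def skellamPMF (l1 l2 : ℝ) (x : ℤ) : ℝ :=
  ∑' k : ℕ, (if 0 ≤ x + (k : ℤ) then poissonPMF l1 (x + (k : ℤ)).toNat else 0) * poissonPMF l2 k

/-- Modified Bessel function of the first kind of integer order `n`,
`I_n(z) = (z/2)^|n| ∑_{k} (z/2)^{2k}/(k! (k+|n|)!)`, with `I_{-n} = I_n`. -/
noncomputable def besselI (n : ℤ) (z : ℝ) : ℝ :=
  (z / 2) ^ n.natAbs *
    ∑' k : ℕ, (z / 2) ^ (2 * k) / ((k.factorial : ℝ) * (k + n.natAbs).factorial)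

/-- Upper tail probability `P(X* ≥ a)` of the Skellam distribution. -/
noncomputable def skellamTail (l1 l2 : ℝ) (a : ℤ) : ℝ :=
  ∑' x : ℤ, if a ≤ x then skellamPMF l1 l2 x else 0

/-! ### Auxiliary machinery -/

noncomputable def skAux (l1 l2 : ℝ) (x : ℤ) (k : ℕ) : ℝ :=
  (if 0 ≤ x + (k : ℤ) then poissonPMF l1 (x + (k : ℤ)).toNat else 0) * poissonPMF l2 k

lemma skellam_eq (l1 l2 : ℝ) (x : ℤ) : skellamPMF l1 l2 x = ∑' k : ℕ, skAux l1 l2 x k := rfl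

lemma poisson_nonneg (l : ℝ) (hl : 0 ≤ l) (n : ℕ) : 0 ≤ poissonPMF l n := by
  unfold poissonPMF; positivity

lemma summable_poisson (l : ℝ) : Summable (poissonPMF l) := by
  unfold poissonPMF
  simpa [mul_div_assoc] using (Real.summable_pow_div_factorial l).mul_left (Real.exp (-l))

lemma poisson_le (l : ℝ) (hl : 0 ≤ l) (n : ℕ) : poissonPMF l n ≤ ∑' m, poissonPMF l m :=
  Summable.le_tsum (summable_poisson l) n (fun j _ => poisson_nonneg l hl j)

lemma skAux_nonneg (l1 l2 : ℝ) (hl1 : 0 ≤ l1) (hl2 : 0 ≤ l2) (x : ℤ) (k : ℕ) :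
    0 ≤ skAux l1 l2 x k := by
  unfold skAux
  apply mul_nonneg _ (poisson_nonneg l2 hl2 k)
  split
  · exact poisson_nonneg l1 hl1 _
  · exact le_refl 0

lemma skellam_nonneg (l1 l2 : ℝ) (hl1 : 0 ≤ l1) (hl2 : 0 ≤ l2) (x : ℤ) :
    0 ≤ skellamPMF l1 l2 x := by
  rw [skellam_eq]
  exact tsum_nonneg (skAux_nonneg l1 l2 hl1 hl2 x)

lemma summable_skAux (l1 l2 : ℝ) (hl1 : 0 ≤ l1) (hl2 : 0 ≤ l2) (x : ℤ) :
    Summable (skAux l1 l2 x) := by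
  refine Summable.of_nonneg_of_le (skAux_nonneg l1 l2 hl1 hl2 x)
    (f := fun k => (∑' m, poissonPMF l1 m) * poissonPMF l2 k) (fun k => ?_)
    ((summable_poisson l2).mul_left _)
  unfold skAux
  split
  · exact mul_le_mul_of_nonneg_right (poisson_le l1 hl1 _) (poisson_nonneg l2 hl2 _)
  · rw [zero_mul]
    exact mul_nonneg (tsum_nonneg (poisson_nonneg l1 hl1)) (poisson_nonneg l2 hl2 k)

lemma poisson_step (l : ℝ) (m : ℕ) :
    ((m : ℝ) + 1) * poissonPMF l (m + 1) = l * poissonPMF l m := by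
  unfold poissonPMF
  rw [Nat.factorial_succ]
  have hm : ((m.factorial : ℝ)) ≠ 0 := Nat.cast_ne_zero.2 m.factorial_ne_zero
  have hm1 : ((m : ℝ) + 1) ≠ 0 := by positivity
  push_cast
  field_simp
  ring

lemma skAux_key (l1 l2 : ℝ) (x : ℤ) (k : ℕ) :
    ((x : ℝ) + (k : ℝ)) * skAux l1 l2 x k = l1 * skAux l1 l2 (x - 1) k := by
  unfold skAux
  rcases lt_trichotomy (x + (k : ℤ)) 0 with h | h | h
  · rw [if_neg (by omega), if_neg (by omega)]; ring
  · rw [if_pos (by omega), if_neg (by omega)]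
    have hx : (x : ℝ) + (k : ℝ) = 0 := by exact_mod_cast h
    rw [hx]; ring
  · set m := (x - 1 + (k : ℤ)).toNat with hmdef
    rw [if_pos (by omega), if_pos (by omega)]
    have htn : (x + (k : ℤ)).toNat = m + 1 := by omega
    have hx : (x : ℝ) + (k : ℝ) = (m : ℝ) + 1 := by
      have : x + (k : ℤ) = (m : ℤ) + 1 := by omega
      exact_mod_cast this
    rw [htn, hx]
    linear_combination poissonPMF l2 k * poisson_step l1 m

lemma skAux_shift (l1 l2 : ℝ) (x : ℤ) (n : ℕ) :
    ((n : ℝ) + 1) * skAux l1 l2 x (n + 1) = l2 * skAux l1 l2 (x + 1) n := by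
  unfold skAux
  have h' : x + ((n + 1 : ℕ) : ℤ) = x + 1 + (n : ℤ) := by push_cast; ring
  rw [h']
  linear_combination (if 0 ≤ x + 1 + (n : ℤ) then poissonPMF l1 (x + 1 + (n : ℤ)).toNat else 0) *
    poisson_step l2 n

lemma skellam_rec (l1 l2 : ℝ) (h1 : 0 < l1) (h2 : 0 < l2) (x : ℤ) :
    (x : ℝ) * skellamPMF l1 l2 x
      = l1 * skellamPMF l1 l2 (x - 1) - l2 * skellamPMF l1 l2 (x + 1) := by
  have hfib : ∀ y, Summable (skAux l1 l2 y) := summable_skAux l1 l2 h1.le h2.le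
  have hshift : (fun n : ℕ => (((n + 1 : ℕ)) : ℝ) * skAux l1 l2 x (n + 1))
      = fun n : ℕ => l2 * skAux l1 l2 (x + 1) n := by
    funext n
    push_cast
    exact skAux_shift l1 l2 x n
  have hd : Summable (fun k : ℕ => (k : ℝ) * skAux l1 l2 x k) := by
    apply (summable_nat_add_iff 1).mp
    have := (hfib (x + 1)).mul_left l2
    rw [← hshift] at this
    exact this
  have hsumd : ∑' k : ℕ, (k : ℝ) * skAux l1 l2 x k = l2 * skellamPMF l1 l2 (x + 1) := by
    rw [Summable.tsum_eq_zero_add hd]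
    simp only [Nat.cast_zero, zero_mul, zero_add]
    rw [hshift, tsum_mul_left, ← skellam_eq]
  have hptw : ∀ k : ℕ, (x : ℝ) * skAux l1 l2 x k
      = l1 * skAux l1 l2 (x - 1) k - (k : ℝ) * skAux l1 l2 x k := by
    intro k
    linear_combination skAux_key l1 l2 x k
  calc (x : ℝ) * skellamPMF l1 l2 x = ∑' k : ℕ, (x : ℝ) * skAux l1 l2 x k := by
        rw [skellam_eq, tsum_mul_left]
    _ = ∑' k : ℕ, (l1 * skAux l1 l2 (x - 1) k - (k : ℝ) * skAux l1 l2 x k) := tsum_congr hptw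
    _ = (∑' k : ℕ, l1 * skAux l1 l2 (x - 1) k) - ∑' k : ℕ, (k : ℝ) * skAux l1 l2 x k :=
        Summable.tsum_sub ((hfib (x - 1)).mul_left l1) hd
    _ = l1 * skellamPMF l1 l2 (x - 1) - l2 * skellamPMF l1 l2 (x + 1) := by
        rw [tsum_mul_left, hsumd, ← skellam_eq]

lemma summable_skellam (l1 l2 : ℝ) (h1 : 0 < l1) (h2 : 0 < l2) :
    Summable (skellamPMF l1 l2) := by
  have hF : Summable (fun q : ℤ × ℕ => skAux l1 l2 q.1 q.2) := by
    have hinj : Function.Injective (fun q : ℕ × ℕ => (((q.1 : ℤ) - q.2, q.2) : ℤ × ℕ)) := by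
      intro p q h
      simp only [Prod.mk.injEq] at h
      obtain ⟨ha, hb⟩ := h
      ext
      · omega
      · exact hb
    have hvanish : ∀ q : ℤ × ℕ,
        q ∉ Set.range (fun q : ℕ × ℕ => (((q.1 : ℤ) - q.2, q.2) : ℤ × ℕ)) →
        skAux l1 l2 q.1 q.2 = 0 := by
      intro q hq
      have hneg : q.1 + (q.2 : ℤ) < 0 := by
        by_contra hcon
        push_neg at hcon
        refine hq ⟨((q.1 + q.2).toNat, q.2), Prod.ext ?_ rfl⟩
        show ((q.1 + (q.2:ℤ)).toNat : ℤ) - q.2 = q.1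
        omega
      unfold skAux
      rw [if_neg (by omega), zero_mul]
    rw [← Function.Injective.summable_iff hinj hvanish]
    have hfun : ((fun q : ℤ × ℕ => skAux l1 l2 q.1 q.2) ∘
        (fun q : ℕ × ℕ => (((q.1 : ℤ) - q.2, q.2) : ℤ × ℕ)))
        = fun q : ℕ × ℕ => poissonPMF l1 q.1 * poissonPMF l2 q.2 := by
      funext q
      simp only [Function.comp, skAux]
      have harg : (((q.1 : ℤ) - q.2 + q.2)).toNat = q.1 := by omega
      rw [if_pos (by omega), harg]
    rw [hfun]
    exact (summable_poisson l1).mul_of_nonneg (summable_poisson l2)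
      (poisson_nonneg l1 h1.le) (poisson_nonneg l2 h2.le)
  have := ((summable_prod_of_nonneg
    (f := fun q : ℤ × ℕ => skAux l1 l2 q.1 q.2)
    (fun q => skAux_nonneg l1 l2 h1.le h2.le q.1 q.2)).mp hF).2
  exact this

lemma summable_tail_ind (l1 l2 : ℝ) (h1 : 0 < l1) (h2 : 0 < l2) (a : ℤ) :
    Summable (fun x : ℤ => if a ≤ x then skellamPMF l1 l2 x else 0) := by
  apply Summable.of_nonneg_of_le _ _ (summable_skellam l1 l2 h1 h2)
  · intro x
    split
    · exact skellam_nonneg l1 l2 h1.le h2.le x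
    · exact le_rfl
  · intro x
    split
    · exact le_rfl
    · exact skellam_nonneg l1 l2 h1.le h2.le x

lemma skellamTail_step (l1 l2 : ℝ) (h1 : 0 < l1) (h2 : 0 < l2) (a : ℤ) :
    skellamTail l1 l2 a = skellamPMF l1 l2 a + skellamTail l1 l2 (a + 1) := by
  have hs1 : Summable (fun x : ℤ => if x = a then skellamPMF l1 l2 a else 0) := by
    apply summable_of_ne_finset_zero (s := {a})
    intro b hb
    rw [if_neg (by simpa using hb)]
  have hs2 := summable_tail_ind l1 l2 h1 h2 (a + 1)
  unfold skellamTail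
  calc (∑' x : ℤ, if a ≤ x then skellamPMF l1 l2 x else 0)
      = ∑' x : ℤ, ((if x = a then skellamPMF l1 l2 a else 0)
          + (if a + 1 ≤ x then skellamPMF l1 l2 x else 0)) := by
        apply tsum_congr
        intro x
        by_cases h : x = a
        · subst h
          rw [if_pos le_rfl, if_pos rfl, if_neg (by omega)]
          ring
        · by_cases h' : a + 1 ≤ x
          · rw [if_pos (by omega), if_neg h, if_pos h']
            ring
          · rw [if_neg (by omega), if_neg h, if_neg h']
            ring
    _ = _ := by rw [Summable.tsum_add hs1 hs2, tsum_ite_eq]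

noncomputable def skG (l1 l2 : ℝ) (d : ℤ) (x : ℤ) : ℝ :=
  if 1 ≤ x then skellamPMF l1 l2 (x + d) else 0

lemma summable_skG (l1 l2 : ℝ) (h1 : 0 < l1) (h2 : 0 < l2) (d : ℤ) :
    Summable (skG l1 l2 d) := by
  have h := ((Equiv.addRight d).summable_iff (f := skellamPMF l1 l2)).2
    (summable_skellam l1 l2 h1 h2)
  have h' : Summable (fun x : ℤ => skellamPMF l1 l2 (x + d)) := by
    exact h
  apply Summable.of_nonneg_of_le _ _ h'
  · intro x
    unfold skG
    split
    · exact skellam_nonneg l1 l2 h1.le h2.le _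
    · exact le_rfl
  · intro x
    unfold skG
    split
    · exact le_rfl
    · exact skellam_nonneg l1 l2 h1.le h2.le _

lemma tsum_skG (l1 l2 : ℝ) (d : ℤ) :
    ∑' x : ℤ, skG l1 l2 d x = skellamTail l1 l2 (1 + d) := by
  unfold skellamTail
  rw [← (Equiv.addRight d).tsum_eq (fun y : ℤ => if 1 + d ≤ y then skellamPMF l1 l2 y else 0)]
  apply tsum_congr
  intro x
  simp only [Equiv.coe_addRight, skG]
  by_cases h : 1 ≤ x
  · simp [h, show 1 + d ≤ x + d by omega]
  · simp [h, show ¬ 1 + d ≤ x + d by omega]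

theorem skellam_partial_second_moment (l1 l2 : ℝ) (h1 : 0 < l1) (h2 : 0 < l2) :
    ∑' x : ℤ, (if 1 ≤ x then (x : ℝ) ^ 2 else 0) * skellamPMF l1 l2 x =
      ((l1 + l2) + (l1 - l2) ^ 2) * skellamTail l1 l2 1
        + l2 * (l1 - l2) * skellamPMF l1 l2 1
        + l1 * (1 + (l1 - l2)) * skellamPMF l1 l2 0 := by
  have hrec := skellam_rec l1 l2 h1 h2
  have hptw : ∀ x : ℤ, (if 1 ≤ x then (x : ℝ) ^ 2 else 0) * skellamPMF l1 l2 x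
      = l1 ^ 2 * skG l1 l2 (-2) x + l2 ^ 2 * skG l1 l2 2 x + l1 * skG l1 l2 (-1) x
        + l2 * skG l1 l2 1 x - 2 * l1 * l2 * skG l1 l2 0 x := by
    intro x
    unfold skG
    by_cases hx : 1 ≤ x
    · rw [if_pos hx, if_pos hx, if_pos hx, if_pos hx, if_pos hx, if_pos hx]
      have r := hrec x
      have r1 := hrec (x - 1)
      have r2 := hrec (x + 1)
      push_cast at r1 r2
      rw [show x + -2 = x - 1 - 1 from by ring, show x + 2 = x + 1 + 1 from by ring,
        show x + -1 = x - 1 from by ring, show x + 0 = x from by ring]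
      rw [show x - 1 + 1 = x from by ring] at r1
      rw [show x + 1 - 1 = x from by ring] at r2
      linear_combination (x : ℝ) * r + l1 * r1 - l2 * r2
    · rw [if_neg hx, if_neg hx, if_neg hx, if_neg hx, if_neg hx, if_neg hx]
      ring
  have S1 := (summable_skG l1 l2 h1 h2 (-2)).mul_left (l1 ^ 2)
  have S2 := (summable_skG l1 l2 h1 h2 2).mul_left (l2 ^ 2)
  have S3 := (summable_skG l1 l2 h1 h2 (-1)).mul_left l1
  have S4 := (summable_skG l1 l2 h1 h2 1).mul_left l2
  have S5 := (summable_skG l1 l2 h1 h2 0).mul_left (2 * l1 * l2)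
  have hsplit : ∑' x : ℤ, (if 1 ≤ x then (x : ℝ) ^ 2 else 0) * skellamPMF l1 l2 x
      = l1 ^ 2 * skellamTail l1 l2 (-1) + l2 ^ 2 * skellamTail l1 l2 3
        + l1 * skellamTail l1 l2 0 + l2 * skellamTail l1 l2 2
        - 2 * l1 * l2 * skellamTail l1 l2 1 := by
    rw [tsum_congr hptw]
    rw [Summable.tsum_sub (((S1.add S2).add S3).add S4) S5,
      Summable.tsum_add ((S1.add S2).add S3) S4,
      Summable.tsum_add (S1.add S2) S3,
      Summable.tsum_add S1 S2]
    rw [tsum_mul_left, tsum_mul_left, tsum_mul_left, tsum_mul_left, tsum_mul_left]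
    rw [tsum_skG l1 l2 (-2), tsum_skG l1 l2 2, tsum_skG l1 l2 (-1), tsum_skG l1 l2 1,
      tsum_skG l1 l2 0]
    norm_num
  have tm1 := skellamTail_step l1 l2 h1 h2 (-1)
  have t0 := skellamTail_step l1 l2 h1 h2 0
  have t1 := skellamTail_step l1 l2 h1 h2 1
  have t2 := skellamTail_step l1 l2 h1 h2 2
  norm_num at tm1 t0 t1 t2
  have hsym : l1 * skellamPMF l1 l2 (-1) = l2 * skellamPMF l1 l2 1 := by
    have h0 := hrec 0
    norm_num at h0
    linarith
  have hr1 : skellamPMF l1 l2 1 = l1 * skellamPMF l1 l2 0 - l2 * skellamPMF l1 l2 2 := by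
    have hh := hrec 1
    norm_num at hh
    linarith
  rw [hsplit]
  linear_combination l1 ^ 2 * tm1 + (l1 ^ 2 + l1) * t0 - (l2 ^ 2 + l2) * t1 - l2 ^ 2 * t2
    + l1 * hsym - l2 * hr1
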